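/- Assume the MAXBET model with m > 4‖W‖√r. Let (O_1,…,O_m) be a candidate critical point of the OTSM problem satisfying Assumption 1, chosen so that ΘᵀO is symmetric positive semidefinite, where O ∈ ℝ^{D×r} stacks O_1,…,O_m. Then: (i) ‖O − Θ‖_F ≤ 4‖W‖√(r/m); (ii) ‖ΘᵀO − m·I_r‖ ≤ 4‖W‖√r; (iii) max_{1≤i≤m}‖[WO]_i‖_F ≤ max_{1≤i≤m}‖[WΘ]_i‖_F + 4‖W‖²√(r/m); and (iv) max_{1≤i≤m}‖O_i − Θ_i‖_F ≤ 2(max_{1≤i≤m}‖[WΘ]_i‖_F + 4‖W‖²√(r/m)) / (m − 4‖W‖√r). -/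

import Mathlib

open Matrix BigOperators MeasureTheory ProbabilityTheory

noncomputable section

/-- The index type of a `D × D` block matrix with blocks of sizes `d 0, …, d (m-1)`. -/
abbrev Idx {m : ℕ} (d : Fin m → ℕ) := (i : Fin m) × Fin (d i)

/-- The `(i,j)` block of a `D × D` matrix. -/
def blk {m : ℕ} {d : Fin m → ℕ} (S : Matrix (Idx d) (Idx d) ℝ) (i j : Fin m) :
    Matrix (Fin (d i)) (Fin (d j)) ℝ :=
  Matrix.of fun a b => S ⟨i, a⟩ ⟨j, b⟩

/-- The `i`-th `d i × r` block of a `D × r` matrix. -/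
def rblk {m r : ℕ} {d : Fin m → ℕ} (V : Matrix (Idx d) (Fin r) ℝ) (i : Fin m) :
    Matrix (Fin (d i)) (Fin r) ℝ :=
  Matrix.of fun a c => V ⟨i, a⟩ c

/-- Stacking matrices `O i ∈ ℝ^{d i × r}` into a `D × r` matrix. -/
def stack {m r : ℕ} {d : Fin m → ℕ} (O : ∀ i, Matrix (Fin (d i)) (Fin r) ℝ) :
    Matrix (Idx d) (Fin r) ℝ :=
  Matrix.of fun p c => O p.1 p.2 c

/-- Semi-orthogonality: `Oᵀ O = I`. -/
def SemiOrth {n r : ℕ} (O : Matrix (Fin n) (Fin r) ℝ) : Prop := Oᵀ * O = 1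

/-- Frobenius norm of a real matrix. -/
def frobNorm {α β : Type*} [Fintype α] [Fintype β] (A : Matrix α β ℝ) : ℝ :=
  Real.sqrt (∑ a, ∑ b, (A a b) ^ 2)

/-- Spectral (ℓ₂ operator) norm of a real matrix. -/
def specNorm {α β : Type*} [Fintype α] [Fintype β] [DecidableEq β] (A : Matrix α β ℝ) : ℝ :=
  ‖LinearMap.toContinuousLinearMap (Matrix.toEuclideanLin A)‖

/-- The OTSM objective `∑ i j, tr(Oᵢᵀ S_{ij} O_j)`. -/
def objVal {m r : ℕ} {d : Fin m → ℕ} (S : Matrix (Idx d) (Idx d) ℝ)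
    (O : ∀ i, Matrix (Fin (d i)) (Fin r) ℝ) : ℝ :=
  ∑ i, ∑ j, Matrix.trace ((O i)ᵀ * blk S i j * O j)

/-- Feasibility for the SDP relaxation. -/
def SDPFeasible {m : ℕ} {d : Fin m → ℕ} (r : ℕ) (U : Matrix (Idx d) (Idx d) ℝ) : Prop :=
  U.PosSemidef ∧ (∀ i, ((1 : Matrix (Fin (d i)) (Fin (d i)) ℝ) - blk U i i).PosSemidef) ∧
    ∀ i, Matrix.trace (blk U i i) = (r : ℝ)

/-- `U` solves the SDP relaxation. -/
def IsSDPSol {m : ℕ} {d : Fin m → ℕ} (r : ℕ) (S U : Matrix (Idx d) (Idx d) ℝ) : Prop :=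
  SDPFeasible r U ∧ ∀ U', SDPFeasible r U' → Matrix.trace (S * U') ≤ Matrix.trace (S * U)

/-- Feasibility for the rank-constrained problem. -/
def RankFeasible {m : ℕ} {d : Fin m → ℕ} (r : ℕ) (U : Matrix (Idx d) (Idx d) ℝ) : Prop :=
  SDPFeasible r U ∧ U.rank = r

/-- `U` solves the rank-constrained problem. -/
def IsRankSol {m : ℕ} {d : Fin m → ℕ} (r : ℕ) (S U : Matrix (Idx d) (Idx d) ℝ) : Prop :=
  RankFeasible r U ∧ ∀ U', RankFeasible r U' → Matrix.trace (S * U') ≤ Matrix.trace (S * U)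

/-- The MAXBET model: `S_{ij} = Θ_i Θ_jᵀ + W_{ij}` with `W` symmetric. -/
def MAXBET {m r : ℕ} {d : Fin m → ℕ} (S W : Matrix (Idx d) (Idx d) ℝ)
    (Θ : ∀ i, Matrix (Fin (d i)) (Fin r) ℝ) : Prop :=
  W.IsSymm ∧ ∀ i j, blk S i j = Θ i * (Θ j)ᵀ + blk W i j

/-- The MAXDIFF model: `S_{ii} = 0`, `S_{ij} = Θ_i Θ_jᵀ + W_{ij}` for `i ≠ j`,
`W` symmetric with `W_{ii} = 0`. -/
def MAXDIFF {m r : ℕ} {d : Fin m → ℕ} (S W : Matrix (Idx d) (Idx d) ℝ)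
    (Θ : ∀ i, Matrix (Fin (d i)) (Fin r) ℝ) : Prop :=
  W.IsSymm ∧ (∀ i, blk W i i = 0) ∧ (∀ i, blk S i i = 0) ∧
    ∀ i j, i ≠ j → blk S i j = Θ i * (Θ j)ᵀ + blk W i j

/-- The Lagrange multiplier `Λ_i = O_iᵀ (∑ j, S_{ij} O_j)`. -/
def lagrange {m r : ℕ} {d : Fin m → ℕ} (S : Matrix (Idx d) (Idx d) ℝ)
    (O : ∀ i, Matrix (Fin (d i)) (Fin r) ℝ) (i : Fin m) : Matrix (Fin r) (Fin r) ℝ :=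
  (O i)ᵀ * ∑ j, blk S i j * O j

/-- `(O_1, …, O_m)` is a critical point of the OTSM problem. -/
def IsCritical {m r : ℕ} {d : Fin m → ℕ} (S : Matrix (Idx d) (Idx d) ℝ)
    (O : ∀ i, Matrix (Fin (d i)) (Fin r) ℝ) : Prop :=
  (∀ i, SemiOrth (O i)) ∧
    ∀ i, (lagrange S O i).IsSymm ∧ O i * lagrange S O i = ∑ j, blk S i j * O j

/-- `(O_1, …, O_m)` is a candidate critical point of the OTSM problem. -/
def IsCandidate {m r : ℕ} {d : Fin m → ℕ} (S : Matrix (Idx d) (Idx d) ℝ)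
    (O : ∀ i, Matrix (Fin (d i)) (Fin r) ℝ) : Prop :=
  IsCritical S O ∧ ∀ i, (lagrange S O i).PosSemidef

/-- Assumption 1: `tr(Θᵀ S Θ) ≤ tr(Oᵀ S O)`. -/
def Assumption1 {m r : ℕ} {d : Fin m → ℕ} (S : Matrix (Idx d) (Idx d) ℝ)
    (Θ O : ∀ i, Matrix (Fin (d i)) (Fin r) ℝ) : Prop :=
  Matrix.trace ((stack Θ)ᵀ * S * stack Θ) ≤ Matrix.trace ((stack O)ᵀ * S * stack O)

/-- `Θ`-discordance of a noise matrix `W`. -/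
def Discordant {m r : ℕ} {d : Fin m → ℕ} (Θ : ∀ i, Matrix (Fin (d i)) (Fin r) ℝ)
    (W : Matrix (Idx d) (Idx d) ℝ) : Prop :=
  W.IsSymm ∧ specNorm W ≤ 3 * Real.sqrt (∑ i, (d i : ℝ)) ∧
    ∀ i, frobNorm (rblk (W * stack Θ) i) ≤
      3 * Real.sqrt ((∑ i, (d i : ℝ)) * r * Real.log m)

/-- The deterministic noise condition (3.1) of Theorem 3.1. -/
def DetCond31 {m r : ℕ} {d : Fin m → ℕ} (Θ : ∀ i, Matrix (Fin (d i)) (Fin r) ℝ)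
    (W : Matrix (Idx d) (Idx d) ℝ) : Prop :=
  specNorm W * (4 * Real.sqrt r + 1) + 1 < (m : ℝ) ∧
  4 * m * ((⨆ i, frobNorm (rblk (W * stack Θ) i)) + 4 * specNorm W ^ 2 * Real.sqrt ((r : ℝ) / m)) /
        ((m : ℝ) - specNorm W * (4 * Real.sqrt r + 1) - 1) +
      2 * ((⨆ i, frobNorm (rblk (W * stack Θ) i)) + 4 * specNorm W ^ 2 * Real.sqrt ((r : ℝ) / m)) +
      8 * specNorm W * Real.sqrt ((r : ℝ) / m) + 2 * specNorm W < (m : ℝ)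

/-- The deterministic noise condition (3.4) of Theorem 3.2. -/
def DetCond32 {m r : ℕ} {d : Fin m → ℕ} (Θ : ∀ i, Matrix (Fin (d i)) (Fin r) ℝ)
    (W : Matrix (Idx d) (Idx d) ℝ) : Prop :=
  4 * specNorm W * Real.sqrt r < (m : ℝ) ∧
  specNorm W * (4 * Real.sqrt r + 1) +
      ((⨆ i, frobNorm (rblk (W * stack Θ) i)) + 4 * specNorm W ^ 2 * Real.sqrt ((r : ℝ) / m)) +
      2 * m * ((⨆ i, frobNorm (rblk (W * stack Θ) i)) + 4 * specNorm W ^ 2 * Real.sqrt ((r : ℝ) / m)) /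
        ((m : ℝ) - 4 * specNorm W * Real.sqrt r) +
      16 * specNorm W ^ 2 * (r : ℝ) / m ≤ (m : ℝ)

/-- The "upper triangular" order on block indices. -/
def upTri {m : ℕ} {d : Fin m → ℕ} (a b : Idx d) : Prop :=
  a.1 < b.1 ∨ (a.1 = b.1 ∧ (a.2 : ℕ) ≤ (b.2 : ℕ))

namespace OTSMAux
open scoped Matrix.Norms.L2Operator RealInnerProductSpace

variable {α β γ : Type*} [Fintype α] [Fintype β] [Fintype γ]

lemma specNorm_eq [DecidableEq β] (A : Matrix α β ℝ) : specNorm A = ‖A‖ := rfl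

lemma specNorm_nonneg [DecidableEq β] (A : Matrix α β ℝ) : 0 ≤ specNorm A := by
  rw [specNorm_eq]; exact norm_nonneg _

lemma conjT (A : Matrix α β ℝ) : Aᴴ = Aᵀ := by
  ext a b; simp

lemma specNorm_transpose [DecidableEq α] [DecidableEq β] (A : Matrix α β ℝ) :
    specNorm Aᵀ = specNorm A := by
  rw [specNorm_eq, specNorm_eq, ← Matrix.l2_opNorm_conjTranspose A, conjT]

lemma specNorm_mul_le [DecidableEq β] [DecidableEq γ] (A : Matrix α β ℝ) (B : Matrix β γ ℝ) :
    specNorm (A * B) ≤ specNorm A * specNorm B := by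
  simpa [specNorm_eq] using Matrix.l2_opNorm_mul A B

lemma sq_le_imp_le {a b : ℝ} (ha : 0 ≤ a) (hb : 0 ≤ b) (h : a ^ 2 ≤ b ^ 2) : a ≤ b := by
  nlinarith

def toE (v : α → ℝ) : EuclideanSpace ℝ α := (WithLp.equiv 2 _).symm v

@[simp] lemma toE_apply (v : α → ℝ) (a : α) : toE v a = v a := rfl

lemma norm_euc_sq (x : EuclideanSpace ℝ α) : ‖x‖ ^ 2 = ∑ a, x a ^ 2 := by
  rw [EuclideanSpace.norm_eq, Real.sq_sqrt (by positivity)]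
  simp [Real.norm_eq_abs, sq_abs]

lemma inner_euc (x y : EuclideanSpace ℝ α) : (inner ℝ x y : ℝ) = ∑ a, x a * y a := by
  simp [PiLp.inner_apply, RCLike.inner_apply, starRingEnd_apply, mul_comm]

lemma frobNorm_eq_norm_toE (A : Matrix α β ℝ) :
    frobNorm A = ‖toE (fun p : α × β => A p.1 p.2)‖ := by
  rw [EuclideanSpace.norm_eq, frobNorm]
  congr 1
  rw [Fintype.sum_prod_type]
  simp [Real.norm_eq_abs, sq_abs]

lemma frobNorm_nonneg (A : Matrix α β ℝ) : 0 ≤ frobNorm A := Real.sqrt_nonneg _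

lemma frobNorm_sq (A : Matrix α β ℝ) : frobNorm A ^ 2 = ∑ a, ∑ b, A a b ^ 2 :=
  Real.sq_sqrt (by positivity)

lemma frobNorm_add_le (A B : Matrix α β ℝ) : frobNorm (A + B) ≤ frobNorm A + frobNorm B := by
  rw [frobNorm_eq_norm_toE, frobNorm_eq_norm_toE, frobNorm_eq_norm_toE]
  have h : toE (fun p : α × β => (A + B) p.1 p.2)
      = toE (fun p : α × β => A p.1 p.2) + toE (fun p : α × β => B p.1 p.2) := rfl
  rw [h]; exact norm_add_le _ _

lemma trace_transpose_mul (A B : Matrix α β ℝ) :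
    Matrix.trace (Aᵀ * B) = ∑ a, ∑ b, A a b * B a b := by
  simp only [Matrix.trace, Matrix.diag, Matrix.mul_apply, Matrix.transpose_apply]
  rw [Finset.sum_comm]

lemma frobNorm_sq_trace (A : Matrix α β ℝ) : frobNorm A ^ 2 = Matrix.trace (Aᵀ * A) := by
  rw [frobNorm_sq, trace_transpose_mul]; simp [sq]

lemma abs_trace_transpose_mul_le (A B : Matrix α β ℝ) :
    |Matrix.trace (Aᵀ * B)| ≤ frobNorm A * frobNorm B := by
  have h : Matrix.trace (Aᵀ * B)
      = (inner ℝ (toE (fun p : α × β => A p.1 p.2)) (toE (fun p : α × β => B p.1 p.2)) : ℝ) := by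
    rw [trace_transpose_mul, inner_euc, Fintype.sum_prod_type]
    simp
  rw [h, frobNorm_eq_norm_toE, frobNorm_eq_norm_toE]
  exact abs_real_inner_le_norm _ _


lemma norm_mulVec_le [DecidableEq β] (A : Matrix α β ℝ) (x : EuclideanSpace ℝ β) :
    ‖toE (A *ᵥ (x : β → ℝ))‖ ≤ specNorm A * ‖x‖ := by
  rw [specNorm_eq]
  exact Matrix.l2_opNorm_mulVec A x

lemma frobNorm_mul_le [DecidableEq β] (A : Matrix α β ℝ) (V : Matrix β γ ℝ) :
    frobNorm (A * V) ≤ specNorm A * frobNorm V := by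
  refine sq_le_imp_le (frobNorm_nonneg _)
    (mul_nonneg (specNorm_nonneg A) (frobNorm_nonneg V)) ?_
  rw [frobNorm_sq, mul_pow, frobNorm_sq, Finset.sum_comm]
  have key : ∀ c, ∑ a, (A * V) a c ^ 2 ≤ specNorm A ^ 2 * ∑ b, V b c ^ 2 := by
    intro c
    have h := norm_mulVec_le A (toE (fun b => V b c))
    have h1 : toE (A *ᵥ ((toE (fun b => V b c)) : β → ℝ)) = toE (fun a => (A * V) a c) := by
      ext a
      simp [Matrix.mulVec, Matrix.mul_apply, dotProduct]
    rw [h1] at h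
    have h2 := mul_self_nonneg (specNorm A * ‖toE (fun b : β => V b c)‖)
    have h3 : ‖toE (fun a => (A * V) a c)‖ ^ 2
        ≤ (specNorm A * ‖toE (fun b : β => V b c)‖) ^ 2 := by
      exact pow_le_pow_left₀ (norm_nonneg _) h 2
    rw [norm_euc_sq] at h3
    rw [mul_pow, norm_euc_sq] at h3
    simpa using h3
  calc ∑ c, ∑ a, (A * V) a c ^ 2 ≤ ∑ c, specNorm A ^ 2 * ∑ b, V b c ^ 2 :=
        Finset.sum_le_sum (fun c _ => key c)
    _ = specNorm A ^ 2 * ∑ b, ∑ c, V b c ^ 2 := by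
        rw [← Finset.mul_sum, Finset.sum_comm]

lemma specNorm_le_frobNorm [DecidableEq β] (A : Matrix α β ℝ) :
    specNorm A ≤ frobNorm A := by
  rw [specNorm]
  refine ContinuousLinearMap.opNorm_le_bound _ (frobNorm_nonneg A) (fun x => ?_)
  have happ : (LinearMap.toContinuousLinearMap (Matrix.toEuclideanLin A)) x
      = toE (A *ᵥ (x : β → ℝ)) := rfl
  rw [happ]
  refine sq_le_imp_le (norm_nonneg _) (mul_nonneg (frobNorm_nonneg A) (norm_nonneg _)) ?_
  rw [norm_euc_sq, mul_pow, frobNorm_sq, norm_euc_sq]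
  rw [Finset.sum_mul]
  refine Finset.sum_le_sum (fun a _ => ?_)
  have h : toE (A *ᵥ (x : β → ℝ)) a = ∑ b, A a b * x b := rfl
  rw [h]
  have := Finset.sum_mul_sq_le_sq_mul_sq Finset.univ (fun b => A a b) (fun b => x b)
  simpa [sq] using this

lemma quad_eq_inner [DecidableEq β] (Q : Matrix β β ℝ) (v : β → ℝ) :
    ∑ b, v b * (Q *ᵥ v) b = (inner ℝ (toE v) (toE (Q *ᵥ v)) : ℝ) := by
  rw [inner_euc]; rfl

lemma quad_abs_le [DecidableEq β] (Q : Matrix β β ℝ) (v : β → ℝ) :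
    |∑ b, v b * (Q *ᵥ v) b| ≤ specNorm Q * ∑ b, v b ^ 2 := by
  rw [quad_eq_inner]
  have h1 := abs_real_inner_le_norm (toE v) (toE (Q *ᵥ v))
  have h3 : ‖toE (Q *ᵥ v)‖ ≤ specNorm Q * ‖toE v‖ := norm_mulVec_le Q (toE v)
  have h4 : ‖toE v‖ ^ 2 = ∑ b, v b ^ 2 := by rw [norm_euc_sq]; rfl
  nlinarith [mul_le_mul_of_nonneg_left h3 (norm_nonneg (toE v)), h1, h4,
    norm_nonneg (toE v), specNorm_nonneg Q]

lemma psd_quad (P : Matrix β β ℝ) (hP : P.PosSemidef) (v : β → ℝ) :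
    0 ≤ ∑ b, v b * (P *ᵥ v) b := by
  simpa [dotProduct] using hP.dotProduct_mulVec_nonneg v

lemma psd_trace_nonneg [DecidableEq β] (P : Matrix β β ℝ) (hP : P.PosSemidef) : 0 ≤ P.trace := by
  rw [Matrix.trace]
  refine Finset.sum_nonneg (fun b _ => ?_)
  have h := hP.dotProduct_mulVec_nonneg (Pi.single b 1)
  simpa [dotProduct, Matrix.mulVec, Pi.single_apply, Finset.sum_ite_eq, Matrix.diag] using h

lemma trace_mul_psd_nonneg [DecidableEq β] (A B : Matrix β β ℝ) (hA : A.PosSemidef) (hB : B.PosSemidef) :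
    0 ≤ (A * B).trace := by
  obtain ⟨C, hC⟩ : ∃ C : Matrix β β ℝ, A = Cᴴ * C := by
    open scoped MatrixOrder in
    exact ⟨CFC.sqrt A, by rw [(CFC.sqrt_nonneg A).posSemidef.1.eq, CFC.sqrt_mul_sqrt_self A hA.nonneg]⟩
  have h : (A * B).trace = (C * B * Cᴴ).trace := by
    rw [hC, ← Matrix.trace_mul_cycle C B Cᴴ]
  rw [h]
  exact psd_trace_nonneg _ (hB.mul_mul_conjTranspose_same C)

lemma trace_mul_psd_le [DecidableEq β] (Q P : Matrix β β ℝ) (hP : P.PosSemidef) :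
    (Q * P).trace ≤ specNorm Q * P.trace := by
  obtain ⟨C, hC⟩ : ∃ C : Matrix β β ℝ, P = Cᴴ * C := by
    open scoped MatrixOrder in
    exact ⟨CFC.sqrt P, by rw [(CFC.sqrt_nonneg P).posSemidef.1.eq, CFC.sqrt_mul_sqrt_self P hP.nonneg]⟩
  have h : (Q * P).trace = (C * Q * Cᴴ).trace := by
    rw [hC, Matrix.trace_mul_comm, ← Matrix.trace_mul_cycle C Q Cᴴ]
  have hPt : P.trace = ∑ k, ∑ b, C k b ^ 2 := by
    rw [hC, conjT, trace_transpose_mul]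
    simp [sq]
  rw [h, hPt, Matrix.trace, Finset.mul_sum]
  refine Finset.sum_le_sum (fun k _ => ?_)
  have hdiag : (C * Q * Cᴴ).diag k = ∑ b, C k b * (Q *ᵥ (fun b' => C k b')) b := by
    simp only [Matrix.diag, Matrix.mul_apply, Matrix.conjTranspose_apply, Matrix.mulVec,
      dotProduct, RCLike.star_def, starRingEnd_apply, star_trivial]
    simp only [Finset.sum_mul, Finset.mul_sum]
    rw [Finset.sum_comm]
    exact Finset.sum_congr rfl fun j _ => Finset.sum_congr rfl fun x _ => by ring
  rw [hdiag]
  calc ∑ b, C k b * (Q *ᵥ (fun b' => C k b')) b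
      ≤ |∑ b, C k b * (Q *ᵥ (fun b' => C k b')) b| := le_abs_self _
    _ ≤ specNorm Q * ∑ b, C k b ^ 2 := quad_abs_le Q _

lemma psd_shift [DecidableEq β] (A : Matrix β β ℝ) (hA : Aᵀ = A) {δ : ℝ}
    (hs : specNorm A ≤ δ) : (A + δ • 1).PosSemidef := by
  refine Matrix.PosSemidef.of_dotProduct_mulVec_nonneg ?_ ?_
  · show (A + δ • 1)ᴴ = A + δ • 1
    rw [Matrix.conjTranspose_add, conjT, hA]
    congr 1
    rw [Matrix.conjTranspose_smul]
    simp
  · intro x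
    have h1 := quad_abs_le A x
    have h2a : (star x) ⬝ᵥ ((δ • (1 : Matrix β β ℝ)) *ᵥ x) = δ * ∑ b, x b ^ 2 := by
      rw [Matrix.smul_mulVec, Matrix.one_mulVec]
      simp only [dotProduct, star_trivial, Pi.smul_apply, smul_eq_mul, Finset.mul_sum]
      exact Finset.sum_congr rfl fun b _ => by ring
    have h2 : (star x) ⬝ᵥ ((A + δ • 1) *ᵥ x)
        = (∑ b, x b * (A *ᵥ x) b) + δ * ∑ b, x b ^ 2 := by
      rw [Matrix.add_mulVec, dotProduct_add, h2a]
      simp [dotProduct]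
    rw [h2]
    have h3 : (0:ℝ) ≤ ∑ b, x b ^ 2 := by positivity
    have := abs_le.mp h1
    nlinarith

lemma specNorm_one_le [DecidableEq β] : specNorm (1 : Matrix β β ℝ) ≤ 1 := by
  rw [specNorm]
  refine ContinuousLinearMap.opNorm_le_bound _ zero_le_one (fun x => ?_)
  have happ : (LinearMap.toContinuousLinearMap (Matrix.toEuclideanLin (1 : Matrix β β ℝ))) x
      = toE ((1 : Matrix β β ℝ) *ᵥ (x : β → ℝ)) := rfl
  rw [happ, Matrix.one_mulVec, one_mul]
  exact le_of_eq rfl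

end OTSMAux

section BlockAux
open OTSMAux
variable {m r : ℕ} {d : Fin m → ℕ}

lemma stackT_mul (U V : ∀ i, Matrix (Fin (d i)) (Fin r) ℝ) :
    (stack U)ᵀ * stack V = ∑ i, (U i)ᵀ * V i := by
  ext c c'
  rw [Matrix.mul_apply, ← Finset.univ_sigma_univ, Finset.sum_sigma]
  simp [Matrix.sum_apply, Matrix.mul_apply, stack, Matrix.transpose_apply]

lemma rblk_mul_stack (W : Matrix (Idx d) (Idx d) ℝ) (V : ∀ i, Matrix (Fin (d i)) (Fin r) ℝ)
    (i : Fin m) : rblk (W * stack V) i = ∑ j, blk W i j * V j := by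
  ext a c
  show (W * stack V) ⟨i, a⟩ c = _
  rw [Matrix.mul_apply, ← Finset.univ_sigma_univ, Finset.sum_sigma]
  simp [Matrix.sum_apply, Matrix.mul_apply, stack, blk]

lemma rblk_add (A B : Matrix (Idx d) (Fin r) ℝ) (i : Fin m) :
    rblk (A + B) i = rblk A i + rblk B i := rfl

lemma frobNorm_rblk_le (V : Matrix (Idx d) (Fin r) ℝ) (i : Fin m) :
    frobNorm (rblk V i) ≤ frobNorm V := by
  refine Real.sqrt_le_sqrt ?_
  rw [← Finset.univ_sigma_univ, Finset.sum_sigma]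
  refine Finset.single_le_sum (f := fun j => ∑ a, ∑ c, V ⟨j, a⟩ c ^ 2)
    (fun j _ => by positivity) (Finset.mem_univ i)

open scoped Matrix.Norms.L2Operator in
lemma specNorm_isometry {α β : Type*} [Fintype α] [Fintype β] [DecidableEq α] [DecidableEq β]
    {c : ℝ} (hc : 0 ≤ c) (V : Matrix α β ℝ) (hV : Vᵀ * V = c • 1) :
    specNorm V ≤ Real.sqrt c ∧ specNorm Vᵀ ≤ Real.sqrt c := by
  have h1 : ‖V‖ * ‖V‖ = ‖Vᴴ * V‖ := (Matrix.l2_opNorm_conjTranspose_mul_self V).symm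
  rw [conjT, hV] at h1
  have h2 : ‖c • (1 : Matrix β β ℝ)‖ ≤ c := by
    rw [norm_smul, Real.norm_eq_abs, abs_of_nonneg hc]
    have h3 : ‖(1 : Matrix β β ℝ)‖ ≤ 1 := by rw [← specNorm_eq]; exact specNorm_one_le
    nlinarith
  have h4 : specNorm V ≤ Real.sqrt c := by
    refine sq_le_imp_le (specNorm_nonneg V) (Real.sqrt_nonneg c) ?_
    rw [Real.sq_sqrt hc, specNorm_eq, sq]
    linarith
  exact ⟨h4, by rw [specNorm_transpose]; exact h4⟩

lemma trace_conj_symm {α β : Type*} [Fintype α] [Fintype β] (A B : Matrix α β ℝ)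
    (L : Matrix β β ℝ) (hL : Lᵀ = L) : ((Aᵀ * B) * L).trace = ((Bᵀ * A) * L).trace := by
  conv_lhs => rw [← Matrix.trace_transpose]
  rw [Matrix.transpose_mul, Matrix.transpose_mul, Matrix.transpose_transpose, hL,
    Matrix.trace_mul_comm]

lemma trace_sum_fin {n : ℕ} (f : Fin n → Matrix (Fin r) (Fin r) ℝ) :
    Matrix.trace (∑ i, f i) = ∑ i, Matrix.trace (f i) :=
  map_sum (Matrix.traceAddMonoidHom (Fin r) ℝ) f Finset.univ

end BlockAux

set_option maxHeartbeats 2000000 in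
/-- Lemma 5.4, MAXBET part: error estimates for a candidate critical point
satisfying Assumption 1, chosen so that `Θᵀ O` is symmetric positive semidefinite. -/
theorem candidate_error_estimates {m r : ℕ} (hm : 0 < m) (hr : 0 < r)
    {d : Fin m → ℕ} (hd : ∀ i, r ≤ d i)
    (Θ : ∀ i, Matrix (Fin (d i)) (Fin r) ℝ) (hΘ : ∀ i, SemiOrth (Θ i))
    (S W : Matrix (Idx d) (Idx d) ℝ) (hmodel : MAXBET S W Θ)
    (hmgt : 4 * specNorm W * Real.sqrt r < (m : ℝ))
    (O : ∀ i, Matrix (Fin (d i)) (Fin r) ℝ)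
    (hcand : IsCandidate S O) (hass : Assumption1 S Θ O)
    (hpsd : ((stack Θ)ᵀ * stack O).PosSemidef) :
    frobNorm (stack O - stack Θ) ≤ 4 * specNorm W * Real.sqrt ((r : ℝ) / m) ∧
    specNorm ((stack Θ)ᵀ * stack O - (m : ℝ) • (1 : Matrix (Fin r) (Fin r) ℝ)) ≤
      4 * specNorm W * Real.sqrt r ∧
    (⨆ i, frobNorm (rblk (W * stack O) i)) ≤
      (⨆ i, frobNorm (rblk (W * stack Θ) i)) + 4 * specNorm W ^ 2 * Real.sqrt ((r : ℝ) / m) ∧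
    (⨆ i, frobNorm (O i - Θ i)) ≤
      2 * ((⨆ i, frobNorm (rblk (W * stack Θ) i)) +
          4 * specNorm W ^ 2 * Real.sqrt ((r : ℝ) / m)) /
        ((m : ℝ) - 4 * specNorm W * Real.sqrt r) := by
  classical
  obtain ⟨hWsymm, hSblk⟩ := hmodel
  obtain ⟨⟨horth, hcrit⟩, hpsdL⟩ := hcand
  haveI : Nonempty (Fin m) := ⟨⟨0, hm⟩⟩
  set ΘS := stack Θ with hΘSdef
  set OS := stack O with hOSdef
  set P := ΘSᵀ * OS with hPdef
  have hm0 : (0:ℝ) < m := by exact_mod_cast hm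
  have hmne : (m:ℝ) ≠ 0 := ne_of_gt hm0
  set sW := specNorm W with hsWdef
  have hsW0 : 0 ≤ sW := OTSMAux.specNorm_nonneg W
  set X := OS - ΘS with hXdef
  set xF := frobNorm X with hxFdef
  have hxF0 : 0 ≤ xF := OTSMAux.frobNorm_nonneg X
  have hθi : ∀ i, (Θ i)ᵀ * Θ i = 1 := hΘ
  have hoi : ∀ i, (O i)ᵀ * O i = 1 := horth
  -- basic identities
  have hcast : ∀ A : Matrix (Fin r) (Fin r) ℝ, m • A = (m:ℝ) • A := fun A =>
    (Nat.cast_smul_eq_nsmul ℝ m A).symm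
  have hΘΘ : ΘSᵀ * ΘS = (m:ℝ) • 1 := by
    rw [hΘSdef, stackT_mul]
    simp only [hθi, Finset.sum_const, Finset.card_univ, Fintype.card_fin]
    rw [hcast]
  have hOO : OSᵀ * OS = (m:ℝ) • 1 := by
    rw [hOSdef, stackT_mul]
    simp only [hoi, Finset.sum_const, Finset.card_univ, Fintype.card_fin]
    rw [hcast]
  have htrsmul : Matrix.trace ((m:ℝ) • (1 : Matrix (Fin r) (Fin r) ℝ)) = (m:ℝ) * r := by
    simp [Matrix.trace_smul, Matrix.trace_one]
  have hS : S = ΘS * ΘSᵀ + W := by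
    ext ⟨i, a⟩ ⟨j, b⟩
    have h := congrFun (congrFun (hSblk i j) a) b
    simp only [blk, Matrix.of_apply, Matrix.add_apply] at h
    simp only [Matrix.add_apply, Matrix.mul_apply, hΘSdef, stack, Matrix.transpose_apply,
      Matrix.of_apply]
    rw [h, Matrix.mul_apply]
    simp [Matrix.transpose_apply]
  -- spectral norms of the stacked frames
  have hΘspec := specNorm_isometry hm0.le ΘS hΘΘ
  have hOspec := specNorm_isometry hm0.le OS hOO
  have hfΘ : frobNorm ΘS = Real.sqrt ((m:ℝ) * r) := by
    rw [← Real.sqrt_sq (OTSMAux.frobNorm_nonneg ΘS), OTSMAux.frobNorm_sq_trace, hΘΘ, htrsmul]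
  have hfO : frobNorm OS = Real.sqrt ((m:ℝ) * r) := by
    rw [← Real.sqrt_sq (OTSMAux.frobNorm_nonneg OS), OTSMAux.frobNorm_sq_trace, hOO, htrsmul]
  have hPsymm : Pᵀ = P := by rw [← OTSMAux.conjT]; exact hpsd.1
  -- expansion of the objective values
  set tΘ := Matrix.trace (ΘSᵀ * (W * ΘS)) with htΘdef
  set tO := Matrix.trace (OSᵀ * (W * OS)) with htOdef
  have e1 : (m:ℝ) * ((m:ℝ) * r) + tΘ ≤ frobNorm P ^ 2 + tO := by
    have hL : Matrix.trace (ΘSᵀ * S * ΘS) = (m:ℝ) * ((m:ℝ) * r) + tΘ := by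
      have hexp : ΘSᵀ * S * ΘS = (ΘSᵀ * ΘS) * (ΘSᵀ * ΘS) + ΘSᵀ * (W * ΘS) := by
        rw [hS]
        simp only [Matrix.mul_add, Matrix.add_mul, Matrix.mul_assoc]
      rw [hexp, Matrix.trace_add, hΘΘ, htΘdef]
      congr 1
      rw [Matrix.smul_mul, Matrix.mul_smul, Matrix.one_mul, smul_smul, Matrix.trace_smul]
      simp [Matrix.trace_one]
      ring
    have hR : Matrix.trace (OSᵀ * S * OS) = frobNorm P ^ 2 + tO := by
      have hexp : OSᵀ * S * OS = Pᵀ * P + OSᵀ * (W * OS) := by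
        rw [hS, hPdef, Matrix.transpose_mul, Matrix.transpose_transpose]
        simp only [Matrix.mul_add, Matrix.add_mul, Matrix.mul_assoc]
      rw [hexp, Matrix.trace_add, ← OTSMAux.frobNorm_sq_trace, htOdef]
    have := hass
    rw [Assumption1] at this
    rw [← hΘSdef, ← hOSdef] at this
    linarith [hL ▸ hR ▸ this]
  have e2 : tO - tΘ ≤ 2 * (sW * (Real.sqrt ((m:ℝ) * r) * xF)) := by
    have hsplit : OSᵀ * (W * OS) - ΘSᵀ * (W * ΘS) = Xᵀ * (W * OS) + ΘSᵀ * (W * X) := by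
      rw [hXdef]
      simp only [Matrix.transpose_sub, Matrix.sub_mul, Matrix.mul_sub]
      abel
    have htr : tO - tΘ = Matrix.trace (Xᵀ * (W * OS)) + Matrix.trace (ΘSᵀ * (W * X)) := by
      rw [htOdef, htΘdef, ← Matrix.trace_sub, hsplit, Matrix.trace_add]
    have b1 : |Matrix.trace (Xᵀ * (W * OS))| ≤ xF * (sW * Real.sqrt ((m:ℝ) * r)) := by
      refine le_trans (OTSMAux.abs_trace_transpose_mul_le X (W * OS)) ?_
      refine mul_le_mul_of_nonneg_left ?_ hxF0
      calc frobNorm (W * OS) ≤ specNorm W * frobNorm OS := OTSMAux.frobNorm_mul_le W OS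
        _ = sW * Real.sqrt ((m:ℝ) * r) := by rw [hfO, hsWdef]
    have b2 : |Matrix.trace (ΘSᵀ * (W * X))| ≤ Real.sqrt ((m:ℝ) * r) * (sW * xF) := by
      refine le_trans (OTSMAux.abs_trace_transpose_mul_le ΘS (W * X)) ?_
      rw [hfΘ]
      refine mul_le_mul_of_nonneg_left ?_ (Real.sqrt_nonneg _)
      exact OTSMAux.frobNorm_mul_le W X
    have b1' := (abs_le.mp b1).2
    have b2' := (abs_le.mp b2).2
    rw [htr]; linarith
  have hPtr0 : 0 ≤ P.trace := OTSMAux.psd_trace_nonneg P hpsd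
  have e3 : frobNorm P ^ 2 ≤ (m:ℝ) * P.trace := by
    have hPP : frobNorm P ^ 2 = (P * P).trace := by
      rw [OTSMAux.frobNorm_sq_trace, hPsymm]
    have hPm : specNorm P ≤ (m:ℝ) := by
      calc specNorm P ≤ specNorm ΘSᵀ * specNorm OS := OTSMAux.specNorm_mul_le ΘSᵀ OS
        _ ≤ Real.sqrt m * Real.sqrt m := by
            exact mul_le_mul hΘspec.2 hOspec.1 (OTSMAux.specNorm_nonneg OS) (Real.sqrt_nonneg _)
        _ = (m:ℝ) := Real.mul_self_sqrt hm0.le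
    calc frobNorm P ^ 2 = (P * P).trace := hPP
      _ ≤ specNorm P * P.trace := OTSMAux.trace_mul_psd_le P P hpsd
      _ ≤ (m:ℝ) * P.trace := mul_le_mul_of_nonneg_right hPm hPtr0
  have e4 : xF ^ 2 = 2 * ((m:ℝ) * r) - 2 * P.trace := by
    have hOTΘ : OSᵀ * ΘS = Pᵀ := by rw [hPdef, Matrix.transpose_mul, Matrix.transpose_transpose]
    have hXX : Xᵀ * X = OSᵀ * OS - Pᵀ - (P - ΘSᵀ * ΘS) := by
      rw [hXdef]
      simp only [Matrix.transpose_sub, Matrix.sub_mul, Matrix.mul_sub]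
      rw [hOTΘ, ← hPdef]
      abel
    rw [hxFdef, OTSMAux.frobNorm_sq_trace, hXX]
    rw [Matrix.trace_sub, Matrix.trace_sub, Matrix.trace_sub, Matrix.trace_transpose,
      hOO, hΘΘ, htrsmul]
    ring
  -- Part (i)
  have key : (m:ℝ) * xF ^ 2 ≤ 4 * (sW * (Real.sqrt ((m:ℝ) * r) * xF)) := by
    have e4m : (m:ℝ) * xF ^ 2 = 2 * ((m:ℝ) * ((m:ℝ) * r)) - 2 * ((m:ℝ) * P.trace) := by
      linear_combination (m:ℝ) * e4
    linarith
  have hsm : Real.sqrt ((r:ℝ) / m) * m = Real.sqrt ((m:ℝ) * r) := by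
    rw [← Real.sqrt_sq hm0.le, ← Real.sqrt_mul (by positivity)]
    rw [Real.sqrt_sq hm0.le]
    congr 1
    field_simp
  have goal1 : xF ≤ 4 * sW * Real.sqrt ((r:ℝ) / m) := by
    have key2 : xF * xF ≤ (4 * sW * Real.sqrt ((r:ℝ) / m)) * xF := by
      rw [← hsm] at key
      refine (mul_le_mul_iff_right₀ hm0).mp ?_
      calc (m:ℝ) * (xF * xF) = (m:ℝ) * xF ^ 2 := by ring
        _ ≤ 4 * (sW * (Real.sqrt ((r:ℝ) / m) * (m:ℝ) * xF)) := key
        _ = (m:ℝ) * (4 * sW * Real.sqrt ((r:ℝ) / m) * xF) := by ring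
    rcases hxF0.eq_or_lt with h | h
    · rw [← h]; positivity
    · exact (mul_le_mul_iff_left₀ h).mp key2
  have hrhs1 : 0 ≤ 4 * sW * Real.sqrt ((r:ℝ) / m) := by positivity
  -- Part (ii)
  have hPid : P - (m:ℝ) • 1 = ΘSᵀ * X := by
    rw [hXdef, Matrix.mul_sub, ← hPdef, hΘΘ]
  have hsmr : Real.sqrt (m:ℝ) * Real.sqrt ((r:ℝ) / m) = Real.sqrt (r:ℝ) := by
    rw [← Real.sqrt_mul hm0.le]
    congr 1
    field_simp
  have goal2 : specNorm (P - (m:ℝ) • 1) ≤ 4 * sW * Real.sqrt (r:ℝ) := by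
    rw [hPid]
    calc specNorm (ΘSᵀ * X) ≤ specNorm ΘSᵀ * specNorm X := OTSMAux.specNorm_mul_le ΘSᵀ X
      _ ≤ Real.sqrt (m:ℝ) * xF := by
          refine mul_le_mul hΘspec.2 (OTSMAux.specNorm_le_frobNorm X)
            (OTSMAux.specNorm_nonneg X) (Real.sqrt_nonneg _)
      _ ≤ Real.sqrt (m:ℝ) * (4 * sW * Real.sqrt ((r:ℝ) / m)) := by
          exact mul_le_mul_of_nonneg_left goal1 (Real.sqrt_nonneg _)
      _ = 4 * sW * Real.sqrt (r:ℝ) := by rw [← hsmr]; ring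
  -- Part (iii)
  have hbdd : BddAbove (Set.range fun i => frobNorm (rblk (W * ΘS) i)) :=
    Set.Finite.bddAbove (Set.finite_range _)
  obtain ⟨Msup, hMsupdef⟩ : ∃ Msup, Msup = ⨆ i, frobNorm (rblk (W * ΘS) i) := ⟨_, rfl⟩
  have hMsup0 : 0 ≤ Msup := by
    rw [hMsupdef]
    refine le_trans (OTSMAux.frobNorm_nonneg (rblk (W * ΘS) ⟨0, hm⟩)) ?_
    exact le_ciSup hbdd ⟨0, hm⟩
  obtain ⟨M, hMdef⟩ : ∃ M, M = Msup + 4 * sW ^ 2 * Real.sqrt ((r:ℝ) / m) := ⟨_, rfl⟩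
  have hM0 : 0 ≤ M := by
    rw [hMdef]
    have : (0:ℝ) ≤ 4 * sW ^ 2 * Real.sqrt ((r:ℝ) / m) := by positivity
    linarith
  have hRbound : ∀ i, frobNorm (rblk (W * OS) i) ≤ M := by
    intro i
    have hWOS : W * OS = W * ΘS + W * X := by
      rw [hXdef, Matrix.mul_sub]; abel
    rw [hWOS, rblk_add]
    refine le_trans (OTSMAux.frobNorm_add_le _ _) ?_
    have h1 : frobNorm (rblk (W * ΘS) i) ≤ Msup := by rw [hMsupdef]; exact le_ciSup hbdd i
    rw [hMdef]
    have h2 : frobNorm (rblk (W * X) i) ≤ 4 * sW ^ 2 * Real.sqrt ((r:ℝ) / m) := by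
      refine le_trans (frobNorm_rblk_le (W * X) i) ?_
      refine le_trans (OTSMAux.frobNorm_mul_le W X) ?_
      calc sW * frobNorm X ≤ sW * (4 * sW * Real.sqrt ((r:ℝ) / m)) :=
            mul_le_mul_of_nonneg_left goal1 hsW0
        _ = 4 * sW ^ 2 * Real.sqrt ((r:ℝ) / m) := by ring
    linarith
  have goal3 : (⨆ i, frobNorm (rblk (W * OS) i)) ≤ M := ciSup_le hRbound
  -- Part (iv)
  have hden : 0 < (m:ℝ) - 4 * sW * Real.sqrt (r:ℝ) := by
    rw [hsWdef]; linarith [hmgt]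
  have hXibound : ∀ i, frobNorm (O i - Θ i) ≤
      2 * M / ((m:ℝ) - 4 * sW * Real.sqrt (r:ℝ)) := by
    intro i
    set Λ := lagrange S O i with hΛdef'
    set R := rblk (W * OS) i with hRdef
    set Xi := O i - Θ i with hXidef
    set fXi := frobNorm Xi with hfXidef
    have hfXi0 : 0 ≤ fXi := OTSMAux.frobNorm_nonneg Xi
    have hsum : (∑ j, blk S i j * O j) = Θ i * P + R := by
      have hterm : ∀ j, blk S i j * O j = Θ i * ((Θ j)ᵀ * O j) + blk W i j * O j := by
        intro j
        rw [hSblk i j, Matrix.add_mul, Matrix.mul_assoc]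
      rw [Finset.sum_congr rfl (fun j _ => hterm j), Finset.sum_add_distrib,
        ← Matrix.mul_sum, ← stackT_mul, hRdef, hPdef, hΘSdef, hOSdef, rblk_mul_stack]
    have hOΛ : O i * Λ = Θ i * P + R := ((hcrit i).2).trans hsum
    have hΛeq : Λ = (O i)ᵀ * (Θ i * P + R) := by
      rw [hΛdef', lagrange, hsum]
    have hΛsym : Λᵀ = Λ := (hcrit i).1
    have hΛpsd : Λ.PosSemidef := hpsdL i
    have hXiPSD : (Xiᵀ * Xi).PosSemidef := by
      have := Matrix.posSemidef_conjTranspose_mul_self Xi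
      rwa [OTSMAux.conjT] at this
    have hexpXi : Xiᵀ * Xi = 1 + 1 - (O i)ᵀ * Θ i - (Θ i)ᵀ * O i := by
      rw [hXidef]
      simp only [Matrix.transpose_sub, Matrix.sub_mul, Matrix.mul_sub]
      rw [hθi i, hoi i]
      abel
    -- candidate inequality: tr(ΘᵀOΛ) ≤ tr Λ
    have k1 : 0 ≤ ((Xiᵀ * Xi) * Λ).trace := OTSMAux.trace_mul_psd_nonneg _ _ hXiPSD hΛpsd
    have hswap : (((O i)ᵀ * Θ i) * Λ).trace = (((Θ i)ᵀ * O i) * Λ).trace :=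
      trace_conj_symm (O i) (Θ i) Λ hΛsym
    have k2 : (((Θ i)ᵀ * O i) * Λ).trace ≤ Λ.trace := by
      have hexp : ((Xiᵀ * Xi) * Λ).trace =
          2 * Λ.trace - 2 * (((Θ i)ᵀ * O i) * Λ).trace := by
        rw [hexpXi]
        simp only [Matrix.sub_mul, Matrix.add_mul, Matrix.one_mul, Matrix.trace_sub,
          Matrix.trace_add]
        rw [hswap]
        ring
      linarith
    -- compute the two traces
    have tr1 : (((Θ i)ᵀ * O i) * Λ).trace = P.trace + ((Θ i)ᵀ * R).trace := by
      rw [Matrix.mul_assoc, hOΛ, Matrix.mul_add, Matrix.trace_add, ← Matrix.mul_assoc,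
        hθi i, Matrix.one_mul]
    have tr2 : Λ.trace = (((O i)ᵀ * Θ i) * P).trace + ((O i)ᵀ * R).trace := by
      rw [hΛeq, Matrix.mul_add, Matrix.trace_add, ← Matrix.mul_assoc]
    have ineqA : P.trace - (((O i)ᵀ * Θ i) * P).trace ≤ (Xiᵀ * R).trace := by
      have hXiR : (Xiᵀ * R).trace = ((O i)ᵀ * R).trace - ((Θ i)ᵀ * R).trace := by
        rw [hXidef, Matrix.transpose_sub, Matrix.sub_mul, Matrix.trace_sub]
      rw [hXiR]
      have := k2
      rw [tr1, tr2] at this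
      linarith
    have ineqB : (Xiᵀ * R).trace ≤ fXi * M := by
      refine le_trans (le_abs_self _) (le_trans (OTSMAux.abs_trace_transpose_mul_le Xi R) ?_)
      exact mul_le_mul_of_nonneg_left (hRbound i) hfXi0
    -- lower bound via P ⪰ (m - δ) I
    obtain ⟨δ, hδdef⟩ : ∃ y, y = 4 * sW * Real.sqrt (r:ℝ) := ⟨_, rfl⟩
    rw [← hδdef] at hden ⊢
    rw [← hδdef] at goal2
    have hPswap : (((O i)ᵀ * Θ i) * P).trace = (((Θ i)ᵀ * O i) * P).trace :=
      trace_conj_symm (O i) (Θ i) P hPsymm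
    have lhs_eq : ((Xiᵀ * Xi) * P).trace = 2 * P.trace - 2 * (((O i)ᵀ * Θ i) * P).trace := by
      rw [hexpXi]
      simp only [Matrix.sub_mul, Matrix.add_mul, Matrix.one_mul, Matrix.trace_sub,
        Matrix.trace_add]
      rw [hPswap]
      ring
    have hshift : (P - ((m:ℝ) - δ) • 1).PosSemidef := by
      have hrw : P - ((m:ℝ) - δ) • 1 = (P - (m:ℝ) • 1) + δ • 1 := by
        rw [sub_smul]; abel
      rw [hrw]
      refine OTSMAux.psd_shift (P - (m:ℝ) • 1) ?_ goal2
      rw [Matrix.transpose_sub, hPsymm, Matrix.transpose_smul, Matrix.transpose_one]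
    have lower : ((m:ℝ) - δ) * fXi ^ 2 ≤ ((Xiᵀ * Xi) * P).trace := by
      have hdecomp : (Xiᵀ * Xi) * P =
          (Xiᵀ * Xi) * (P - ((m:ℝ) - δ) • 1) + (Xiᵀ * Xi) * (((m:ℝ) - δ) • 1) := by
        rw [← Matrix.mul_add]
        congr 1
        abel
      have h1 : 0 ≤ ((Xiᵀ * Xi) * (P - ((m:ℝ) - δ) • 1)).trace :=
        OTSMAux.trace_mul_psd_nonneg _ _ hXiPSD hshift
      have h2 : ((Xiᵀ * Xi) * (((m:ℝ) - δ) • 1)).trace = ((m:ℝ) - δ) * fXi ^ 2 := by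
        rw [Matrix.mul_smul, Matrix.mul_one, Matrix.trace_smul, smul_eq_mul,
          hfXidef, OTSMAux.frobNorm_sq_trace]
      rw [hdecomp, Matrix.trace_add, h2]
      linarith
    -- combine
    have final : ((m:ℝ) - δ) * fXi ^ 2 ≤ 2 * (fXi * M) := by
      have := lower
      rw [lhs_eq] at this
      linarith
    rcases hfXi0.eq_or_lt with h | h
    · rw [← h]
      exact div_nonneg (by linarith) hden.le
    · rw [le_div_iff₀ hden]
      have : (fXi * ((m:ℝ) - δ)) * fXi ≤ (2 * M) * fXi := by
        calc (fXi * ((m:ℝ) - δ)) * fXi = ((m:ℝ) - δ) * fXi ^ 2 := by ring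
          _ ≤ 2 * (fXi * M) := final
          _ = (2 * M) * fXi := by ring
      have h2 := (mul_le_mul_iff_left₀ h).mp this
      linarith
  have goal4 : (⨆ i, frobNorm (O i - Θ i)) ≤
      2 * M / ((m:ℝ) - 4 * sW * Real.sqrt (r:ℝ)) := ciSup_le hXibound
  rw [hMdef, hMsupdef] at goal3 goal4
  exact ⟨goal1, goal2, goal3, goal4⟩

end
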